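/- Let G be a snark (a connected cubic graph that is not 3-edge-colourable) and let e = uv be an edge of G. Then the cubic graph G∼e obtained from G by deleting e and suppressing the two resulting 2-valent vertices is 3-edge-colourable if and only if the graph G − {u,v} (G with both endvertices of e removed) is 3-edge-colourable. -/

import Mathlib

/-- The Klein four-group `Z₂ × Z₂`; Tait colourings use its three nonzero
elements as colours. -/
abbrev Klein : Type := ZMod 2 × ZMod 2

/-- A (cubic) multipole: a finite set of vertices and edges, where each edge has
two ends (`fst` and `snd`), each of which is either incident with a vertex
(`some v`) or free (`none`), the latter being a *semiedge*. -/
structure Multipole where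
  V : Type
  E : Type
  [instVF : Fintype V]
  [instEF : Fintype E]
  [instVD : DecidableEq V]
  [instED : DecidableEq E]
  fst : E → Option V
  snd : E → Option V

attribute [instance] Multipole.instVF Multipole.instEF Multipole.instVD Multipole.instED

namespace Multipole

variable (M : Multipole)

/-- The end of edge `e` on side `b`. -/
def endAt (e : M.E) (b : Bool) : Option M.V := if b then M.fst e else M.snd e

/-- The number of edge ends incident with `v`. -/
def degree (v : M.V) : ℕ :=
  (Finset.univ.filter fun p : M.E × Bool => M.endAt p.1 p.2 = some v).card

/-- Every vertex is incident with exactly three edge ends. -/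
def IsCubic : Prop := ∀ v : M.V, M.degree v = 3

/-- No semiedges: every edge end is incident with a vertex (i.e. `M` is a graph). -/
def Closed : Prop := ∀ (e : M.E) (b : Bool), M.endAt e b ≠ none

/-- Edge `e` joins vertices `x` and `y`. -/
def Joins (e : M.E) (x y : M.V) : Prop :=
  (M.fst e = some x ∧ M.snd e = some y) ∨ (M.fst e = some y ∧ M.snd e = some x)

def Adj (x y : M.V) : Prop := ∃ e : M.E, M.Joins e x y

def Conn : Prop := ∀ x y : M.V, Relation.ReflTransGen M.Adj x y

/-- A proper 3-edge-colouring (Tait colouring): every edge gets a nonzero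
element of the Klein group and the edge ends meeting at any vertex get
pairwise distinct colours. -/
def Proper (φ : M.E → Klein) : Prop :=
  (∀ e, φ e ≠ 0) ∧
  ∀ (v : M.V) (p q : M.E × Bool),
    M.endAt p.1 p.2 = some v → M.endAt q.1 q.2 = some v → p ≠ q → φ p.1 ≠ φ q.1

def Colourable : Prop := ∃ φ : M.E → Klein, M.Proper φ

/-- A colouring viewed as a nowhere-zero `Z₂ × Z₂`-flow: nonzero colours whose
sum at each vertex is `0`.  At 3-valent vertices this is equivalent to
properness; at a 2-valent vertex it forces the two incident edges to receive
equal colours, which is exactly the condition for the colouring to descend to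
the cubic graph obtained by suppressing that vertex. -/
def ProperFlow (φ : M.E → Klein) : Prop :=
  (∀ e, φ e ≠ 0) ∧
  ∀ v : M.V, (∑ p : M.E × Bool, if M.endAt p.1 p.2 = some v then φ p.1 else 0) = 0

def FlowColourable : Prop := ∃ φ : M.E → Klein, M.ProperFlow φ

/-- A snark: a connected cubic graph without a proper 3-edge-colouring. -/
def IsSnark : Prop := M.IsCubic ∧ M.Closed ∧ M.Conn ∧ ¬ M.Colourable

/-- The number of semiedges of `M`. -/
def semiendCount : ℕ :=
  (Finset.univ.filter fun p : M.E × Bool => M.endAt p.1 p.2 = none).card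

/-- The number of semiedges of `M` whose edge is coloured `c`. -/
def semiendColourCount (φ : M.E → Klein) (c : Klein) : ℕ :=
  (Finset.univ.filter fun p : M.E × Bool => M.endAt p.1 p.2 = none ∧ φ p.1 = c).card

/-- The sum of the colours on the semiedges of `M`. -/
def semiSum (φ : M.E → Klein) : Klein :=
  ∑ p : M.E × Bool, if M.endAt p.1 p.2 = none then φ p.1 else 0

/-- Delete a set of vertices, retaining dangling edges; edges with no end
outside `S` are discarded. -/
noncomputable def delVerts (S : Finset M.V) : Multipole := by
  classical
  exact
    { V := {x : M.V // x ∉ S}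
      E := {e : M.E // ∃ (b : Bool) (x : M.V), M.endAt e b = some x ∧ x ∉ S}
      fst := fun e => match M.fst e.1 with
        | none => none
        | some x => if h : x ∈ S then none else some ⟨x, h⟩
      snd := fun e => match M.snd e.1 with
        | none => none
        | some x => if h : x ∈ S then none else some ⟨x, h⟩ }

/-- The flow through the connector of `M.delVerts S` consisting of the
semiedges formerly incident with the deleted vertex `u`. -/
noncomputable def connFlow (S : Finset M.V) (φ : (M.delVerts S).E → Klein) (u : M.V) : Klein :=
  ∑ e : (M.delVerts S).E,
    ((if M.fst e.1 = some u then φ e else 0) + (if M.snd e.1 = some u then φ e else 0))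

/-- Delete a single edge (keeping its end vertices). -/
def delEdge (e0 : M.E) : Multipole where
  V := M.V
  E := {e : M.E // e ≠ e0}
  fst := fun e => M.fst e.1
  snd := fun e => M.snd e.1

/-- Delete a pair of edges (keeping their end vertices). -/
def delPair (e1 e2 : M.E) : Multipole where
  V := M.V
  E := {e : M.E // e ≠ e1 ∧ e ≠ e2}
  fst := fun e => M.fst e.1
  snd := fun e => M.snd e.1

/-- Sever the edge `e0`: replace it by two dangling edges. -/
def sever (e0 : M.E) : Multipole where
  V := M.V
  E := M.E ⊕ Unit
  fst := fun e => match e with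
    | .inl f => M.fst f
    | .inr _ => M.snd e0
  snd := fun e => match e with
    | .inl f => if f = e0 then none else M.snd f
    | .inr _ => none

/-- The I-extension `G(e₁,e₂)`: subdivide `e₁` and `e₂` each with a new vertex
and join the two new vertices by a new edge. -/
def extend (e1 e2 : M.E) : Multipole where
  V := M.V ⊕ Fin 2
  E := M.E ⊕ Fin 3
  fst := fun e => match e with
    | .inl f => (M.fst f).map Sum.inl
    | .inr i => if i = 0 then some (Sum.inr 0)
        else if i = 1 then some (Sum.inr 1) else some (Sum.inr 0)
  snd := fun e => match e with
    | .inl f => if f = e1 then some (Sum.inr 0)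
        else if f = e2 then some (Sum.inr 1) else (M.snd f).map Sum.inl
    | .inr i => if i = 0 then (M.snd e1).map Sum.inl
        else if i = 1 then (M.snd e2).map Sum.inl else some (Sum.inr 1)

/-- A bicritical snark: a snark in which the removal of any two distinct
vertices leaves a 3-edge-colourable multipole. -/
def Bicritical : Prop :=
  M.IsSnark ∧ ∀ x y : M.V, x ≠ y → (M.delVerts {x, y}).Colourable

end Multipole

namespace Multipole
open Finset

variable (G : Multipole)

lemma klein_self (x : Klein) : x + x = 0 := by
  revert x; decide

lemma klein_add_eq_zero (x y : Klein) : x + y = 0 ↔ x = y := by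
  revert x y; decide

/-- The set of edge ends at a vertex. -/
def endsAt (x : G.V) : Finset (G.E × Bool) :=
  Finset.univ.filter fun p => G.endAt p.1 p.2 = some x

lemma mem_endsAt {x : G.V} {p : G.E × Bool} :
    p ∈ G.endsAt x ↔ G.endAt p.1 p.2 = some x := by
  simp [endsAt]

lemma card_endsAt (x : G.V) : (G.endsAt x).card = G.degree x := rfl

lemma klein_sum3_eq_zero {α : Type*} (s : Finset α) (f : α → Klein) (h3 : s.card = 3)
    (h0 : ∀ a ∈ s, f a ≠ 0) (hinj : ∀ a ∈ s, ∀ b ∈ s, a ≠ b → f a ≠ f b) :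
    ∑ a ∈ s, f a = 0 := by
  classical
  obtain ⟨a, b, c, hab, hac, hbc, rfl⟩ := Finset.card_eq_three.mp h3
  rw [Finset.sum_insert (by simp [hab, hac]), Finset.sum_insert (by simp [hbc]),
    Finset.sum_singleton]
  have key : ∀ x y z : Klein, x ≠ 0 → y ≠ 0 → z ≠ 0 → x ≠ y → x ≠ z → y ≠ z →
      x + (y + z) = 0 := by decide
  exact key _ _ _ (h0 a (by simp)) (h0 b (by simp)) (h0 c (by simp))
    (hinj a (by simp) b (by simp) hab) (hinj a (by simp) c (by simp) hac)
    (hinj b (by simp) c (by simp) hbc)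

lemma klein_sum3_ne {α : Type*} (s : Finset α) (f : α → Klein) (h3 : s.card = 3)
    (h0 : ∀ a ∈ s, f a ≠ 0) (hsum : ∑ a ∈ s, f a = 0)
    {p q : α} (hp : p ∈ s) (hq : q ∈ s) (hpq : p ≠ q) : f p ≠ f q := by
  classical
  obtain ⟨a, b, c, hab, hac, hbc, rfl⟩ := Finset.card_eq_three.mp h3
  rw [Finset.sum_insert (by simp [hab, hac]), Finset.sum_insert (by simp [hbc]),
    Finset.sum_singleton] at hsum
  have key : ∀ x y z : Klein, x ≠ 0 → y ≠ 0 → z ≠ 0 → x + (y + z) = 0 →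
      x ≠ y ∧ x ≠ z ∧ y ≠ z := by decide
  obtain ⟨K1, K2, K3⟩ := key _ _ _ (h0 a (by simp)) (h0 b (by simp)) (h0 c (by simp)) hsum
  simp only [Finset.mem_insert, Finset.mem_singleton] at hp hq
  rcases hp with rfl | rfl | rfl <;> rcases hq with rfl | rfl | rfl <;>
    first
      | exact absurd rfl hpq
      | exact K1 | exact K2 | exact K3
      | exact K1.symm | exact K2.symm | exact K3.symm

lemma endAt_delEdge (e0 : G.E) (f : (G.delEdge e0).E) (b : Bool) :
    (G.delEdge e0).endAt f b = G.endAt f.1 b := by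
  cases b <;> rfl

lemma endAt_delVerts (S : Finset G.V) (f : (G.delVerts S).E) (b : Bool) :
    (G.delVerts S).endAt f b = (G.endAt f.1 b).bind
      (fun x => if h : x ∈ S then none else some ⟨x, h⟩) := by
  classical
  cases b
  · show (G.delVerts S).snd f = (G.snd f.1).bind _
    rcases h : G.snd f.1 with _ | x <;> simp [delVerts, h]
  · show (G.delVerts S).fst f = (G.fst f.1).bind _
    rcases h : G.fst f.1 with _ | x <;> simp [delVerts, h]

lemma endAt_delVerts_some {S : Finset G.V} {f : (G.delVerts S).E} {b : Bool} {x : G.V}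
    (hx : x ∉ S) :
    (G.delVerts S).endAt f b = some ⟨x, hx⟩ ↔ G.endAt f.1 b = some x := by
  rw [endAt_delVerts]
  rcases h : G.endAt f.1 b with _ | y
  · simp
  · simp only [Option.bind_some]
    split_ifs with hy
    · constructor
      · intro h'; exact absurd h' (by simp)
      · intro h'; rw [Option.some_inj] at h'; exact absurd (h' ▸ hy) hx
    · constructor
      · intro h'; replace h' := Option.some_inj.mp h'
        have : y = x := congrArg Subtype.val h'
        rw [this]
      · intro h'; rw [Option.some_inj] at h'; subst h'; rfl

lemma endAt_delVerts_none {S : Finset G.V} {f : (G.delVerts S).E} {b : Bool} :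
    (G.delVerts S).endAt f b = none ↔
      G.endAt f.1 b = none ∨ ∃ x ∈ S, G.endAt f.1 b = some x := by
  rw [endAt_delVerts]
  rcases h : G.endAt f.1 b with _ | y
  · simp
  · simp only [Option.bind_some]
    split_ifs with hy
    · simp [hy]
    · simp [hy]

/-- Convert a flow sum over the ends of `G.delEdge e0` at `w` to a filtered sum in `G`. -/
lemma delEdge_flow_sum (e0 : G.E) (φ : (G.delEdge e0).E → Klein) (w : G.V) :
    (∑ p : (G.delEdge e0).E × Bool,
        @ite _ ((G.delEdge e0).endAt p.1 p.2 = @some (G.delEdge e0).V w)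
          (@Option.instDecidableEq _ (G.delEdge e0).instVD _ _) (φ p.1) 0)
      = ∑ q ∈ (G.endsAt w).filter (fun q => q.1 ≠ e0),
          (if h : q.1 = e0 then 0 else φ ⟨q.1, h⟩) := by
  classical
  rw [← Finset.sum_filter]
  apply Finset.sum_bij (fun p _ => (p.1.1, p.2))
  · intro p hp
    simp only [Finset.mem_filter, Finset.mem_univ, true_and] at hp
    rw [endAt_delEdge] at hp
    simp [mem_endsAt, hp, p.1.2]
    rfl
  · intro p hp p' hp' hpp
    obtain ⟨h1, h2⟩ := Prod.mk.injEq .. ▸ hpp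
    exact Prod.ext (Subtype.ext h1) h2
  · intro q hq
    simp only [Finset.mem_filter, mem_endsAt] at hq
    exact ⟨(⟨q.1, hq.2⟩, q.2), by
      simp only [Finset.mem_filter, Finset.mem_univ, true_and]
      exact hq.1, rfl⟩
  · intro p hp
    simp [p.1.2]
    rfl

end Multipole

namespace Multipole
open Finset

variable (G : Multipole)

lemma klein_cancel (x y : Klein) : x + y = x → y = 0 := by
  revert x y; decide

/-- An edge survives the deletion of the vertex set `S` if it has an end outside `S`. -/
def kept (S : Finset G.V) (f : G.E) : Prop :=
  ∃ (b : Bool) (x : G.V), G.endAt f b = some x ∧ x ∉ S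

instance keptDec (S : Finset G.V) : DecidablePred (G.kept S) := fun f => by
  unfold kept; infer_instance

/-- Extension of a colouring of `G.delVerts S` to all edges of `G` (by zero). -/
def psiHat (S : Finset G.V) (ψ : (G.delVerts S).E → Klein) (f : G.E) : Klein :=
  if h : G.kept S f then ψ ⟨f, h⟩ else 0

lemma proper_transfer (S : Finset G.V) (ψ : (G.delVerts S).E → Klein)
    (hψ : (G.delVerts S).Proper ψ) {x : G.V} (hx : x ∉ S)
    {p q : G.E × Bool} (hp : p ∈ G.endsAt x) (hq : q ∈ G.endsAt x) (hpq : p ≠ q) :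
    G.psiHat S ψ p.1 ≠ G.psiHat S ψ q.1 := by
  rw [mem_endsAt] at hp hq
  have hkp : G.kept S p.1 := ⟨p.2, x, hp, hx⟩
  have hkq : G.kept S q.1 := ⟨q.2, x, hq, hx⟩
  have hne : ((⟨p.1, hkp⟩ : (G.delVerts S).E), p.2) ≠ ((⟨q.1, hkq⟩ : (G.delVerts S).E), q.2) := by
    intro hcon
    have h1 : (p.1, p.2) = (q.1, q.2) := by
      have h2 := congrArg (fun r : (G.delVerts S).E × Bool => (r.1.1, r.2)) hcon
      simpa using h2
    rw [Prod.mk.injEq] at h1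
    exact hpq (Prod.ext h1.1 h1.2)
  have := hψ.2 ⟨x, hx⟩ _ _ ((G.endAt_delVerts_some hx).mpr hp)
    ((G.endAt_delVerts_some hx).mpr hq) hne
  simpa [psiHat, dif_pos hkp, dif_pos hkq] using this

lemma parity_aux (hcub : G.IsCubic) (hcl : G.Closed) {u v : G.V} (huv : u ≠ v)
    (ψ : (G.delVerts {u, v}).E → Klein) (hψ : (G.delVerts {u, v}).Proper ψ) :
    (∑ q ∈ (G.endsAt u).filter (fun q => G.kept {u, v} q.1), G.psiHat {u, v} ψ q.1)
      + ∑ q ∈ (G.endsAt v).filter (fun q => G.kept {u, v} q.1), G.psiHat {u, v} ψ q.1 = 0 := by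
  set W := G.psiHat {u, v} ψ with hW
  set vsum : G.V → Klein :=
    fun x => ∑ q ∈ (G.endsAt x).filter (fun q => G.kept {u, v} q.1), W q.1 with hvsum
  have hvs : ∀ x : G.V, x ∉ ({u, v} : Finset G.V) → vsum x = 0 := by
    intro x hx
    have hfil : (G.endsAt x).filter (fun q => G.kept {u, v} q.1) = G.endsAt x :=
      Finset.filter_true_of_mem fun q hq => ⟨q.2, x, (G.mem_endsAt).mp hq, hx⟩
    rw [hvsum]
    simp only
    rw [hfil]
    refine klein_sum3_eq_zero _ _ (by rw [card_endsAt]; exact hcub x) ?_ ?_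
    · intro q hq
      have hk : G.kept {u, v} q.1 := ⟨q.2, x, (G.mem_endsAt).mp hq, hx⟩
      rw [hW, psiHat, dif_pos hk]
      exact hψ.1 _
    · intro a ha b hb hab
      exact G.proper_transfer _ ψ hψ hx ha hb hab
  have key : ∑ x : G.V, vsum x = 0 := by
    have h1 : ∀ x : G.V, vsum x
        = ∑ q : G.E × Bool, if G.endAt q.1 q.2 = some x then
            (if G.kept {u, v} q.1 then W q.1 else 0) else 0 := by
      intro x
      rw [hvsum]
      simp only
      rw [Finset.sum_filter, endsAt, Finset.sum_filter]
    calc ∑ x : G.V, vsum x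
        = ∑ x : G.V, ∑ q : G.E × Bool, (if G.endAt q.1 q.2 = some x then
            (if G.kept {u, v} q.1 then W q.1 else 0) else 0) :=
          Finset.sum_congr rfl fun x _ => h1 x
      _ = ∑ q : G.E × Bool, ∑ x : G.V, (if G.endAt q.1 q.2 = some x then
            (if G.kept {u, v} q.1 then W q.1 else 0) else 0) := Finset.sum_comm
      _ = ∑ q : G.E × Bool, (if G.kept {u, v} q.1 then W q.1 else 0) := by
          refine Finset.sum_congr rfl fun q _ => ?_
          rcases hq : G.endAt q.1 q.2 with _ | x0
          · exact absurd hq (hcl _ _)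
          · simp only [hq, Option.some.injEq]
            rw [Finset.sum_ite_eq]
            simp
      _ = ∑ f : G.E, ((if G.kept {u, v} f then W f else 0)
            + (if G.kept {u, v} f then W f else 0)) := by
          rw [Fintype.sum_prod_type]
          exact Finset.sum_congr rfl fun f _ => Fintype.sum_bool _
      _ = 0 := Finset.sum_eq_zero fun f _ => klein_self _
  have hsub : ∑ x ∈ ({u, v} : Finset G.V), vsum x = ∑ x : G.V, vsum x :=
    Finset.sum_subset (Finset.subset_univ _) (fun x _ hx => hvs x hx)
  have := hsub.trans key
  rwa [Finset.sum_pair huv] at this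

end Multipole

open Multipole

/-- Let `G` be a snark and `e = uv` one of its edges.  The cubic graph `G∼e`
obtained by deleting `e` and suppressing the two resulting 2-valent vertices is
3-edge-colourable (equivalently, `G` minus the edge `e` carries a nowhere-zero
`Z₂ × Z₂`-flow colouring, which is exactly a colouring descending through the
suppression of `u` and `v`) if and only if the multipole `G − {u,v}` is
3-edge-colourable. -/
theorem edge_reduction_iff_vertex_removal (G : Multipole) (hG : G.IsSnark)
    (u v : G.V) (huv : u ≠ v) (e : G.E) (he : G.Joins e u v) :
    (G.delEdge e).FlowColourable ↔ (G.delVerts {u, v}).Colourable := by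
  obtain ⟨hcub, hcl, -, hncol⟩ := hG
  obtain ⟨bu, hbu, hbv⟩ : ∃ b, G.endAt e b = some u ∧ G.endAt e (!b) = some v := by
    rcases he with ⟨h1, h2⟩ | ⟨h1, h2⟩
    · exact ⟨true, by simpa [Multipole.endAt] using h1, by simpa [Multipole.endAt] using h2⟩
    · exact ⟨false, by simpa [Multipole.endAt] using h2, by simpa [Multipole.endAt] using h1⟩
  have heOr : ∀ b, G.endAt e b = some u ∨ G.endAt e b = some v := by
    intro b
    rcases eq_or_ne b bu with rfl | hb
    · exact Or.inl hbu
    · have hb' : b = !bu := by revert hb; cases b <;> cases bu <;> simp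
      rw [hb']; exact Or.inr hbv
  have hKe : ¬ G.kept {u, v} e := by
    rintro ⟨b, x, hb, hx⟩
    simp only [Finset.mem_insert, Finset.mem_singleton, not_or] at hx
    rcases heOr b with h | h <;> rw [h, Option.some_inj] at hb <;> subst hb
    · exact hx.1 rfl
    · exact hx.2 rfl
  have hA : ∀ (w : G.V), w ≠ u → w ≠ v → ∀ q : G.E × Bool, q ∈ G.endsAt w → q.1 ≠ e := by
    intro w hwu hwv q hq hqe
    rw [mem_endsAt] at hq
    rw [hqe] at hq
    rcases heOr q.2 with h | h <;> rw [h, Option.some_inj] at hq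
    · exact hwu hq.symm
    · exact hwv hq.symm
  have hfilw : ∀ (w : G.V), w ≠ u → w ≠ v →
      (G.endsAt w).filter (fun q => q.1 ≠ e) = G.endsAt w :=
    fun w hwu hwv => Finset.filter_true_of_mem (fun q hq => hA w hwu hwv q hq)
  constructor
  · -- forward: flow on G - e gives colouring of G - {u, v}
    rintro ⟨φ, hφ0, hφflow⟩
    have hneE : ∀ f : (G.delVerts {u, v}).E, f.1 ≠ e := by
      intro f hfe
      apply hKe
      rw [← hfe]
      exact f.2
    refine ⟨fun f => φ ⟨f.1, hneE f⟩, fun f => hφ0 _, ?_⟩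
    rintro ⟨x, hx⟩ P Q hP hQ hPQ
    have hxu : x ≠ u := by rintro rfl; exact hx (by simp)
    have hxv : x ≠ v := by rintro rfl; exact hx (by simp)
    have hp : G.endAt P.1.1 P.2 = some x := (G.endAt_delVerts_some hx).mp hP
    have hq : G.endAt Q.1.1 Q.2 = some x := (G.endAt_delVerts_some hx).mp hQ
    have hflow := hφflow x
    rw [G.delEdge_flow_sum, hfilw x hxu hxv] at hflow
    have h0 : ∀ q ∈ G.endsAt x, (if h : q.1 = e then (0 : Klein) else φ ⟨q.1, h⟩) ≠ 0 := by
      intro q hq'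
      rw [dif_neg (hA x hxu hxv q hq')]
      exact hφ0 _
    have hPQ' : (P.1.1, P.2) ≠ (Q.1.1, Q.2) := by
      intro hcon
      rw [Prod.mk.injEq] at hcon
      exact hPQ (Prod.ext (Subtype.ext hcon.1) hcon.2)
    have hres := klein_sum3_ne (G.endsAt x) _ (by rw [card_endsAt]; exact hcub x) h0 hflow
      (G.mem_endsAt.mpr hp) (G.mem_endsAt.mpr hq) hPQ'
    simpa [dif_neg (hneE P.1), dif_neg (hneE Q.1)] using hres
  · -- backward
    rintro ⟨ψ, hψ0, hψ2⟩
    set W := G.psiHat {u, v} ψ with hWdef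
    have hW : ∀ (f : G.E) (h : G.kept {u, v} f), W f = ψ ⟨f, h⟩ := fun f h => dif_pos h
    have hW0 : ∀ f : G.E, G.kept {u, v} f → W f ≠ 0 := by
      intro f h; rw [hW f h]; exact hψ0 _
    have hend_u : ∀ q : G.E × Bool, q ∈ G.endsAt u → q.1 = e → q = (e, bu) := by
      intro q hq hqe
      rw [mem_endsAt] at hq
      refine Prod.ext hqe ?_
      by_contra hb
      have hb' : q.2 = !bu := by revert hb; cases q.2 <;> cases bu <;> simp
      rw [hqe, hb', hbv] at hq
      exact huv (Option.some_inj.mp hq).symm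
    have hend_v : ∀ q : G.E × Bool, q ∈ G.endsAt v → q.1 = e → q = (e, !bu) := by
      intro q hq hqe
      rw [mem_endsAt] at hq
      refine Prod.ext hqe ?_
      by_contra hb
      have hb' : q.2 = bu := by revert hb; cases q.2 <;> cases bu <;> simp
      rw [hqe, hb', hbu] at hq
      exact huv (Option.some_inj.mp hq)
    have hDu2 : ((G.endsAt u).filter (fun q => q.1 ≠ e)).card = 2 := by
      have h1 : (G.endsAt u).filter (fun q => q.1 ≠ e) = (G.endsAt u).erase (e, bu) := by
        ext q
        simp only [Finset.mem_filter, Finset.mem_erase]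
        constructor
        · rintro ⟨hq, hqe⟩
          exact ⟨fun hcon => hqe (by rw [hcon]), hq⟩
        · rintro ⟨hqne, hq⟩
          exact ⟨hq, fun hqe => hqne (hend_u q hq hqe)⟩
      rw [h1, Finset.card_erase_of_mem (G.mem_endsAt.mpr hbu), card_endsAt, hcub u]
    have hDv2 : ((G.endsAt v).filter (fun q => q.1 ≠ e)).card = 2 := by
      have h1 : (G.endsAt v).filter (fun q => q.1 ≠ e) = (G.endsAt v).erase (e, !bu) := by
        ext q
        simp only [Finset.mem_filter, Finset.mem_erase]
        constructor
        · rintro ⟨hq, hqe⟩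
          exact ⟨fun hcon => hqe (by rw [hcon]), hq⟩
        · rintro ⟨hqne, hq⟩
          exact ⟨hq, fun hqe => hqne (hend_v q hq hqe)⟩
      rw [h1, Finset.card_erase_of_mem (G.mem_endsAt.mpr hbv), card_endsAt, hcub v]
    obtain ⟨p1, p2, hp12, hDu⟩ := Finset.card_eq_two.mp hDu2
    obtain ⟨q1, q2, hq12, hDv⟩ := Finset.card_eq_two.mp hDv2
    have hp1m : p1 ∈ (G.endsAt u).filter (fun q => q.1 ≠ e) := by rw [hDu]; simp
    have hp2m : p2 ∈ (G.endsAt u).filter (fun q => q.1 ≠ e) := by rw [hDu]; simp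
    have hq1m : q1 ∈ (G.endsAt v).filter (fun q => q.1 ≠ e) := by rw [hDv]; simp
    have hq2m : q2 ∈ (G.endsAt v).filter (fun q => q.1 ≠ e) := by rw [hDv]; simp
    have hp1u : G.endAt p1.1 p1.2 = some u := G.mem_endsAt.mp (Finset.mem_filter.mp hp1m).1
    have hp2u : G.endAt p2.1 p2.2 = some u := G.mem_endsAt.mp (Finset.mem_filter.mp hp2m).1
    have hq1v : G.endAt q1.1 q1.2 = some v := G.mem_endsAt.mp (Finset.mem_filter.mp hq1m).1
    have hq2v : G.endAt q2.1 q2.2 = some v := G.mem_endsAt.mp (Finset.mem_filter.mp hq2m).1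
    have hp1e : p1.1 ≠ e := (Finset.mem_filter.mp hp1m).2
    have hp2e : p2.1 ≠ e := (Finset.mem_filter.mp hp2m).2
    have hq1e : q1.1 ≠ e := (Finset.mem_filter.mp hq1m).2
    have hq2e : q2.1 ≠ e := (Finset.mem_filter.mp hq2m).2
    have hmem_u : ∀ q : G.E × Bool, G.endAt q.1 q.2 = some u → q.1 ≠ e → q = p1 ∨ q = p2 := by
      intro q hq hqe
      have hm : q ∈ (G.endsAt u).filter (fun q => q.1 ≠ e) :=
        Finset.mem_filter.mpr ⟨G.mem_endsAt.mpr hq, hqe⟩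
      rw [hDu] at hm
      simpa using hm
    have hmem_v : ∀ q : G.E × Bool, G.endAt q.1 q.2 = some v → q.1 ≠ e → q = q1 ∨ q = q2 := by
      intro q hq hqe
      have hm : q ∈ (G.endsAt v).filter (fun q => q.1 ≠ e) :=
        Finset.mem_filter.mpr ⟨G.mem_endsAt.mpr hq, hqe⟩
      rw [hDv] at hm
      simpa using hm
    set cU := ∑ q ∈ (G.endsAt u).filter (fun q => G.kept {u, v} q.1), W q.1 with hcUdef
    set cV := ∑ q ∈ (G.endsAt v).filter (fun q => G.kept {u, v} q.1), W q.1 with hcVdef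
    have hpar : cU + cV = 0 := G.parity_aux hcub hcl huv ψ ⟨hψ0, hψ2⟩
    have hUV : cU = cV := (klein_add_eq_zero _ _).mp hpar
    have hcUf : (G.endsAt u).filter (fun q => G.kept {u, v} q.1)
        = ({p1, p2} : Finset (G.E × Bool)).filter (fun q => G.kept {u, v} q.1) := by
      rw [← hDu]
      ext q
      simp only [Finset.mem_filter]
      constructor
      · rintro ⟨hq, hk⟩
        exact ⟨⟨hq, fun hqe => hKe (hqe ▸ hk)⟩, hk⟩
      · rintro ⟨⟨hq, -⟩, hk⟩
        exact ⟨hq, hk⟩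
    have hcVf : (G.endsAt v).filter (fun q => G.kept {u, v} q.1)
        = ({q1, q2} : Finset (G.E × Bool)).filter (fun q => G.kept {u, v} q.1) := by
      rw [← hDv]
      ext q
      simp only [Finset.mem_filter]
      constructor
      · rintro ⟨hq, hk⟩
        exact ⟨⟨hq, fun hqe => hKe (hqe ▸ hk)⟩, hk⟩
      · rintro ⟨⟨hq, -⟩, hk⟩
        exact ⟨hq, hk⟩
    have hcU_kk : G.kept {u, v} p1.1 → G.kept {u, v} p2.1 → cU = W p1.1 + W p2.1 := by
      intro k1 k2
      rw [hcUdef, hcUf, Finset.filter_true_of_mem, Finset.sum_pair hp12]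
      intro q hq
      rcases Finset.mem_insert.mp hq with rfl | hq'
      · exact k1
      · rw [Finset.mem_singleton] at hq'; subst hq'; exact k2
    have hcV_kk : G.kept {u, v} q1.1 → G.kept {u, v} q2.1 → cV = W q1.1 + W q2.1 := by
      intro k1 k2
      rw [hcVdef, hcVf, Finset.filter_true_of_mem, Finset.sum_pair hq12]
      intro q hq
      rcases Finset.mem_insert.mp hq with rfl | hq'
      · exact k1
      · rw [Finset.mem_singleton] at hq'; subst hq'; exact k2
    have hcU_k1 : G.kept {u, v} p1.1 → ¬ G.kept {u, v} p2.1 → cU = W p1.1 := by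
      intro k1 k2
      rw [hcUdef, hcUf, Finset.filter_insert, if_pos k1, Finset.filter_singleton, if_neg k2,
        Finset.sum_insert (Finset.notMem_empty _), Finset.sum_empty, add_zero]
    have hcU_k2 : ¬ G.kept {u, v} p1.1 → G.kept {u, v} p2.1 → cU = W p2.1 := by
      intro k1 k2
      rw [hcUdef, hcUf, Finset.filter_insert, if_neg k1, Finset.filter_singleton, if_pos k2,
        Finset.sum_singleton]
    have hcU_nn : ¬ G.kept {u, v} p1.1 → ¬ G.kept {u, v} p2.1 → cU = 0 := by
      intro k1 k2
      rw [hcUdef, hcUf, Finset.filter_insert, if_neg k1, Finset.filter_singleton, if_neg k2,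
        Finset.sum_empty]
    have hcV_k1 : G.kept {u, v} q1.1 → ¬ G.kept {u, v} q2.1 → cV = W q1.1 := by
      intro k1 k2
      rw [hcVdef, hcVf, Finset.filter_insert, if_pos k1, Finset.filter_singleton, if_neg k2,
        Finset.sum_insert (Finset.notMem_empty _), Finset.sum_empty, add_zero]
    have hcV_k2 : ¬ G.kept {u, v} q1.1 → G.kept {u, v} q2.1 → cV = W q2.1 := by
      intro k1 k2
      rw [hcVdef, hcVf, Finset.filter_insert, if_neg k1, Finset.filter_singleton, if_pos k2,
        Finset.sum_singleton]
    have hcV_nn : ¬ G.kept {u, v} q1.1 → ¬ G.kept {u, v} q2.1 → cV = 0 := by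
      intro k1 k2
      rw [hcVdef, hcVf, Finset.filter_insert, if_neg k1, Finset.filter_singleton, if_neg k2,
        Finset.sum_empty]
    have hother : ∀ q : G.E × Bool, ¬ G.kept {u, v} q.1 →
        ∃ y, G.endAt q.1 (!q.2) = some y ∧ (y = u ∨ y = v) := by
      intro q hk
      rcases hy : G.endAt q.1 (!q.2) with - | y
      · exact absurd hy (hcl _ _)
      · refine ⟨y, rfl, ?_⟩
        by_contra hcon
        push_neg at hcon
        exact hk ⟨!q.2, y, hy, by simp [hcon.1, hcon.2]⟩
    -- the snark argument
    have SNK : G.kept {u, v} p1.1 → G.kept {u, v} p2.1 → cU = 0 := by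
      intro k1 k2
      by_contra hcu
      have hcv : cV ≠ 0 := by rw [← hUV]; exact hcu
      have hkq : ∀ r ∈ ({q1, q2} : Finset (G.E × Bool)), G.kept {u, v} r.1 := by
        intro r hr
        by_contra hkr
        obtain ⟨y, hy, hyuv⟩ := hother r hkr
        have hrq : r = q1 ∨ r = q2 := by simpa using hr
        have hre : r.1 ≠ e := by
          rcases hrq with rfl | rfl
          · exact hq1e
          · exact hq2e
        have hbne : (r.1, !r.2) ≠ r := by
          intro hcon
          have h2 := congrArg Prod.snd hcon
          simp at h2
        rcases hyuv with rfl | rfl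
        · rcases hmem_u (r.1, !r.2) hy hre with h | h
          · exact hkr (by rw [show r.1 = p1.1 by simpa using congrArg Prod.fst h]; exact k1)
          · exact hkr (by rw [show r.1 = p2.1 by simpa using congrArg Prod.fst h]; exact k2)
        · rcases hmem_v (r.1, !r.2) hy hre with h | h
          · rcases hrq with rfl | rfl
            · exact hbne h
            · have e1 : q1.1 = r.1 := by simpa using (congrArg Prod.fst h).symm
              exact hcv (hcV_nn (by rw [e1]; exact hkr) hkr)
          · rcases hrq with rfl | rfl
            · have e2 : q2.1 = r.1 := by simpa using (congrArg Prod.fst h).symm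
              exact hcv (hcV_nn hkr (by rw [e2]; exact hkr))
            · exact hbne h
      have kq1 : G.kept {u, v} q1.1 := hkq q1 (by simp)
      have kq2 : G.kept {u, v} q2.1 := hkq q2 (by simp)
      have hall : ∀ f : G.E, f ≠ e → G.kept {u, v} f := by
        intro f hfe
        by_contra hkf
        have h1 : ∃ y, G.endAt f true = some y ∧ (y = u ∨ y = v) := by
          simpa using hother (f, false) hkf
        obtain ⟨y, hy, hyuv⟩ := h1
        rcases hyuv with rfl | rfl
        · rcases hmem_u (f, true) hy hfe with h | h
          · exact hkf (by rw [show f = p1.1 by simpa using congrArg Prod.fst h]; exact k1)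
          · exact hkf (by rw [show f = p2.1 by simpa using congrArg Prod.fst h]; exact k2)
        · rcases hmem_v (f, true) hy hfe with h | h
          · exact hkf (by rw [show f = q1.1 by simpa using congrArg Prod.fst h]; exact kq1)
          · exact hkf (by rw [show f = q2.1 by simpa using congrArg Prod.fst h]; exact kq2)
      have hcUW : cU = W p1.1 + W p2.1 := hcU_kk k1 k2
      have hcVW : cV = W q1.1 + W q2.1 := hcV_kk kq1 kq2
      apply hncol
      refine ⟨fun f => if f = e then cU else W f, ?_, ?_⟩
      · intro f
        by_cases hf : f = e
        · simp only [if_pos hf]; exact hcu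
        · simp only [if_neg hf]; exact hW0 f (hall f hf)
      · intro x P Q hP hQ hPQ
        by_cases hxu : x = u
        · subst hxu
          have hcase : ∀ R : G.E × Bool, G.endAt R.1 R.2 = some x →
              R.1 = e ∨ (R = p1 ∨ R = p2) := by
            intro R hR
            by_cases hRe : R.1 = e
            · exact Or.inl hRe
            · exact Or.inr (hmem_u R hR hRe)
          rcases hcase P hP with hPe | hPp <;> rcases hcase Q hQ with hQe | hQp
          · exact absurd ((hend_u P (G.mem_endsAt.mpr hP) hPe).trans
              (hend_u Q (G.mem_endsAt.mpr hQ) hQe).symm) hPQ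
          · simp only [if_pos hPe]
            rcases hQp with rfl | rfl
            · simp only [if_neg hp1e]
              intro hcon
              exact hW0 p2.1 k2 (klein_cancel _ _ (by rw [← hcUW, hcon]))
            · simp only [if_neg hp2e]
              intro hcon
              exact hW0 p1.1 k1 (klein_cancel _ _ (by rw [add_comm, ← hcUW, hcon]))
          · simp only [if_pos hQe]
            rcases hPp with rfl | rfl
            · simp only [if_neg hp1e]
              intro hcon
              exact hW0 p2.1 k2 (klein_cancel _ _ (by rw [← hcUW, ← hcon]))
            · simp only [if_neg hp2e]
              intro hcon
              exact hW0 p1.1 k1 (klein_cancel _ _ (by rw [add_comm, ← hcUW, ← hcon]))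
          · rcases hPp with rfl | rfl <;> rcases hQp with rfl | rfl
            · exact absurd rfl hPQ
            · simp only [if_neg hp1e, if_neg hp2e]
              intro hcon
              exact hcu (by rw [hcUW, hcon]; exact klein_self _)
            · simp only [if_neg hp2e, if_neg hp1e]
              intro hcon
              exact hcu (by rw [hcUW, ← hcon]; exact klein_self _)
            · exact absurd rfl hPQ
        · by_cases hxv : x = v
          · subst hxv
            have hcase : ∀ R : G.E × Bool, G.endAt R.1 R.2 = some x →
                R.1 = e ∨ (R = q1 ∨ R = q2) := by
              intro R hR
              by_cases hRe : R.1 = e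
              · exact Or.inl hRe
              · exact Or.inr (hmem_v R hR hRe)
            have hcUV : cU = W q1.1 + W q2.1 := hUV.trans hcVW
            rcases hcase P hP with hPe | hPp <;> rcases hcase Q hQ with hQe | hQp
            · exact absurd ((hend_v P (G.mem_endsAt.mpr hP) hPe).trans
                (hend_v Q (G.mem_endsAt.mpr hQ) hQe).symm) hPQ
            · simp only [if_pos hPe]
              rcases hQp with rfl | rfl
              · simp only [if_neg hq1e]
                intro hcon
                exact hW0 q2.1 kq2 (klein_cancel _ _ (by rw [← hcUV, hcon]))
              · simp only [if_neg hq2e]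
                intro hcon
                exact hW0 q1.1 kq1 (klein_cancel _ _ (by rw [add_comm, ← hcUV, hcon]))
            · simp only [if_pos hQe]
              rcases hPp with rfl | rfl
              · simp only [if_neg hq1e]
                intro hcon
                exact hW0 q2.1 kq2 (klein_cancel _ _ (by rw [← hcUV, ← hcon]))
              · simp only [if_neg hq2e]
                intro hcon
                exact hW0 q1.1 kq1 (klein_cancel _ _ (by rw [add_comm, ← hcUV, ← hcon]))
            · rcases hPp with rfl | rfl <;> rcases hQp with rfl | rfl
              · exact absurd rfl hPQ
              · simp only [if_neg hq1e, if_neg hq2e]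
                intro hcon
                exact hcv (by rw [hcVW, hcon]; exact klein_self _)
              · simp only [if_neg hq2e, if_neg hq1e]
                intro hcon
                exact hcv (by rw [hcVW, ← hcon]; exact klein_self _)
              · exact absurd rfl hPQ
          · have hx : x ∉ ({u, v} : Finset G.V) := by simp [hxu, hxv]
            have hPe : P.1 ≠ e := hA x hxu hxv P (G.mem_endsAt.mpr hP)
            have hQe : Q.1 ≠ e := hA x hxu hxv Q (G.mem_endsAt.mpr hQ)
            simp only [if_neg hPe, if_neg hQe]
            exact G.proper_transfer _ ψ ⟨hψ0, hψ2⟩ hx (G.mem_endsAt.mpr hP)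
              (G.mem_endsAt.mpr hQ) hPQ
    have SNKv : G.kept {u, v} q1.1 → G.kept {u, v} q2.1 → cV = 0 := by
      intro kq1 kq2
      by_contra hcv
      have hcu : cU ≠ 0 := by rw [hUV]; exact hcv
      have hkp : ∀ r ∈ ({p1, p2} : Finset (G.E × Bool)), G.kept {u, v} r.1 := by
        intro r hr
        by_contra hkr
        obtain ⟨y, hy, hyuv⟩ := hother r hkr
        have hrp : r = p1 ∨ r = p2 := by simpa using hr
        have hre : r.1 ≠ e := by
          rcases hrp with rfl | rfl
          · exact hp1e
          · exact hp2e
        have hbne : (r.1, !r.2) ≠ r := by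
          intro hcon
          have h2 := congrArg Prod.snd hcon
          simp at h2
        rcases hyuv with rfl | rfl
        · rcases hmem_u (r.1, !r.2) hy hre with h | h
          · rcases hrp with rfl | rfl
            · exact hbne h
            · have e1 : p1.1 = r.1 := by simpa using (congrArg Prod.fst h).symm
              exact hcu (hcU_nn (by rw [e1]; exact hkr) hkr)
          · rcases hrp with rfl | rfl
            · have e2 : p2.1 = r.1 := by simpa using (congrArg Prod.fst h).symm
              exact hcu (hcU_nn hkr (by rw [e2]; exact hkr))
            · exact hbne h
        · rcases hmem_v (r.1, !r.2) hy hre with h | h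
          · exact hkr (by rw [show r.1 = q1.1 by simpa using congrArg Prod.fst h]; exact kq1)
          · exact hkr (by rw [show r.1 = q2.1 by simpa using congrArg Prod.fst h]; exact kq2)
      exact hcu (SNK (hkp p1 (by simp)) (hkp p2 (by simp)))
    -- the flow colouring of G.delEdge e
    set Φ : (G.delEdge e).E → Klein := fun f =>
      if h : G.kept {u, v} f.1 then ψ ⟨f.1, h⟩
      else (if cU = 0 then ((1 : ZMod 2), (0 : ZMod 2)) else cU) with hΦdef
    have hΦk : ∀ (f : (G.delEdge e).E) (h : G.kept {u, v} f.1), Φ f = ψ ⟨f.1, h⟩ :=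
      fun f h => dif_pos h
    have hΦn : ∀ f : (G.delEdge e).E, ¬ G.kept {u, v} f.1 →
        Φ f = (if cU = 0 then ((1 : ZMod 2), (0 : ZMod 2)) else cU) :=
      fun f h => dif_neg h
    refine ⟨Φ, ?_, ?_⟩
    · intro f
      by_cases h : G.kept ({u, v} : Finset G.V) f.1
      · rw [hΦk f h]; exact hψ0 _
      · rw [hΦn f h]
        split_ifs with hc
        · decide
        · exact hc
    · intro w
      rw [G.delEdge_flow_sum e Φ w]
      by_cases hwu : w = u
      · rw [hwu, hDu, Finset.sum_pair hp12]
        simp only [dif_neg hp1e, dif_neg hp2e]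
        rw [klein_add_eq_zero]
        by_cases k1 : G.kept {u, v} p1.1 <;> by_cases k2 : G.kept {u, v} p2.1
        · have hc0 : cU = 0 := SNK k1 k2
          have hWW : W p1.1 = W p2.1 := (klein_add_eq_zero _ _).mp (by
            rw [← hcU_kk k1 k2]; exact hc0)
          rw [hΦk ⟨p1.1, hp1e⟩ k1, hΦk ⟨p2.1, hp2e⟩ k2, ← hW _ k1, ← hW _ k2]
          exact hWW
        · rw [hΦk ⟨p1.1, hp1e⟩ k1, hΦn ⟨p2.1, hp2e⟩ k2]
          have hcUW : cU = W p1.1 := hcU_k1 k1 k2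
          have hcne : cU ≠ 0 := by rw [hcUW]; exact hW0 _ k1
          rw [if_neg hcne, hcUW, hW _ k1]
        · rw [hΦn ⟨p1.1, hp1e⟩ k1, hΦk ⟨p2.1, hp2e⟩ k2]
          have hcUW : cU = W p2.1 := hcU_k2 k1 k2
          have hcne : cU ≠ 0 := by rw [hcUW]; exact hW0 _ k2
          rw [if_neg hcne, hcUW, hW _ k2]
        · rw [hΦn ⟨p1.1, hp1e⟩ k1, hΦn ⟨p2.1, hp2e⟩ k2]
      · by_cases hwv : w = v
        · rw [hwv, hDv, Finset.sum_pair hq12]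
          simp only [dif_neg hq1e, dif_neg hq2e]
          rw [klein_add_eq_zero]
          by_cases k1 : G.kept {u, v} q1.1 <;> by_cases k2 : G.kept {u, v} q2.1
          · have hc0 : cV = 0 := SNKv k1 k2
            have hWW : W q1.1 = W q2.1 := (klein_add_eq_zero _ _).mp (by
              rw [← hcV_kk k1 k2]; exact hc0)
            rw [hΦk ⟨q1.1, hq1e⟩ k1, hΦk ⟨q2.1, hq2e⟩ k2, ← hW _ k1, ← hW _ k2]
            exact hWW
          · rw [hΦk ⟨q1.1, hq1e⟩ k1, hΦn ⟨q2.1, hq2e⟩ k2]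
            have hcVW : cV = W q1.1 := hcV_k1 k1 k2
            have hcne : cU ≠ 0 := by rw [hUV, hcVW]; exact hW0 _ k1
            rw [if_neg hcne, hUV, hcVW, hW _ k1]
          · rw [hΦn ⟨q1.1, hq1e⟩ k1, hΦk ⟨q2.1, hq2e⟩ k2]
            have hcVW : cV = W q2.1 := hcV_k2 k1 k2
            have hcne : cU ≠ 0 := by rw [hUV, hcVW]; exact hW0 _ k2
            rw [if_neg hcne, hUV, hcVW, hW _ k2]
          · rw [hΦn ⟨q1.1, hq1e⟩ k1, hΦn ⟨q2.1, hq2e⟩ k2]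
        · rw [hfilw w hwu hwv]
          have hwS : w ∉ ({u, v} : Finset G.V) := fun h => by
            rcases Finset.mem_insert.mp h with h | h
            · exact hwu h
            · exact hwv (Finset.mem_singleton.mp h)
          have hconv : ∀ q ∈ G.endsAt w,
              (if h : q.1 = e then (0 : Klein) else Φ ⟨q.1, h⟩) = W q.1 := by
            intro q hq
            have hqe := hA w hwu hwv q hq
            have hk : G.kept {u, v} q.1 := ⟨q.2, w, G.mem_endsAt.mp hq, hwS⟩
            rw [dif_neg hqe, hΦk ⟨q.1, hqe⟩ hk, hW _ hk]
          rw [Finset.sum_congr rfl hconv]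
          exact klein_sum3_eq_zero _ _ (hcub w)
            (fun q hq => hW0 _ ⟨q.2, w, G.mem_endsAt.mp hq, hwS⟩)
            (fun a ha b hb hab => G.proper_transfer _ ψ ⟨hψ0, hψ2⟩ hwS ha hb hab)
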